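/- arXiv:1508.02262 — 2 statements merged into one kernel-verified Lean document; each statement's English description precedes it below -/
import Mathlib

section
/- The one-step Kiefer-Wolfowitz map is monotone: for fixed $V \ge 0$ and $A \ge 0$, if $w, w' \in \mathbb{R}^c_{\ge 0}$ are sorted ascending vectors with $w_i \le w'_i$ for all $i$, then $\mathcal{S}((w + V e_1 - A \mathbf{1})^+)_i \le \mathcal{S}((w' + V e_1 - A \mathbf{1})^+)_i$ for all $i$. -/
open Filter

noncomputable def sortVec {c : ℕ} (w : Fin c → ℝ) : Fin c → ℝ := w ∘ Tuple.sort w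

noncomputable def kwStep {c : ℕ} (V A : ℝ) (w : Fin c → ℝ) : Fin c → ℝ :=
  sortVec (fun i => max (w i + (if (i : ℕ) = 0 then V else 0) - A) 0)

noncomputable def kwIter {c : ℕ} (V A : ℕ → ℝ) (w : Fin c → ℝ) : ℕ → Fin c → ℝ
  | 0 => w
  | n + 1 => kwStep (V n) (A n) (kwIter V A w n)

lemma card_le_sort {c : ℕ} (f : Fin c → ℝ) (a : ℝ) :
    Fintype.card {i // (f ∘ Tuple.sort f) i ≤ a} = Fintype.card {i // f i ≤ a} :=
  Fintype.card_congr ((Tuple.sort f).subtypeEquiv (fun i => Iff.rfl))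

lemma sortVec_mono {c : ℕ} (f g : Fin c → ℝ) (h : ∀ i, f i ≤ g i) :
    ∀ i, sortVec f i ≤ sortVec g i := by
  intro i
  have hF := Tuple.monotone_sort f
  have hG := Tuple.monotone_sort g
  set a := (g ∘ Tuple.sort g) i with ha
  have h1 : (i : Fin c) < Fintype.card {j // (g ∘ Tuple.sort g) j ≤ a} :=
    by rw [Fintype.card_subtype]; exact (Tuple.lt_card_le_iff_apply_le_of_monotone (a := a) (j := i) hG).2 le_rfl
  have h2 : Fintype.card {j // g j ≤ a} ≤ Fintype.card {j // f j ≤ a} :=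
    Fintype.card_le_of_injective (fun x => ⟨x.1, (h x.1).trans x.2⟩)
      (fun x y hxy => Subtype.ext (by simpa using congrArg Subtype.val hxy))
  have h3 : (i : Fin c) < Fintype.card {j // (f ∘ Tuple.sort f) j ≤ a} := by
    rw [card_le_sort]
    rw [card_le_sort] at h1
    exact lt_of_lt_of_le h1 h2
  exact (Tuple.lt_card_le_iff_apply_le_of_monotone (a := a) (j := i) hF).1 (by rwa [Fintype.card_subtype] at h3)

/-- one-step Kiefer-Wolfowitz map is monotone. -/
theorem kwStep_monotone {c : ℕ} (V A : ℝ) (hV : 0 ≤ V) (hA : 0 ≤ A)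
    (w w' : Fin c → ℝ) (hw0 : ∀ i, 0 ≤ w i) (hw'0 : ∀ i, 0 ≤ w' i)
    (hws : Monotone w) (hw's : Monotone w')
    (hle : ∀ i, w i ≤ w' i) :
    ∀ i, kwStep V A w i ≤ kwStep V A w' i := by
  apply sortVec_mono
  intro i
  exact max_le_max (by gcongr; exact hle i) le_rfl
end

section
/- For the deterministic Kiefer-Wolfowitz recursion with constant inputs $V_k \equiv cm - \epsilon$ and $A_k \equiv m$ (where $m, \epsilon > 0$, $c \ge 1$ integer), started from any sorted vector $w$ with largest entry $w_c \le K$: after $\lceil cK/\epsilon \rceil$ steps and during the next $c$ steps, the smallest entry of the iterate is $0$ and the largest entry is strictly less than $cm$. -/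
open Filter

/-- Order statistics are monotone: if `v ≤ z` componentwise, then the sorted versions
are componentwise comparable as well. -/
lemma sortVec_le_sortVec {c : ℕ} {v z : Fin c → ℝ} (h : ∀ i, v i ≤ z i) (j : Fin c) :
    sortVec v j ≤ sortVec z j := by
  classical
  set a := sortVec z j with ha
  have hmz : Monotone (sortVec z) := Tuple.monotone_sort z
  have hmv : Monotone (sortVec v) := Tuple.monotone_sort v
  have hzj : (j : ℕ) < Fintype.card {i // sortVec z i ≤ a} :=
    by rw [Fintype.card_subtype]; exact (Tuple.lt_card_le_iff_apply_le_of_monotone (f := sortVec z) (a := a) (j := j) hmz).2 le_rfl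
  refine (Tuple.lt_card_le_iff_apply_le_of_monotone (f := sortVec v) (a := a) (j := j) hmv).1 ?_
  rw [← Fintype.card_subtype]
  refine lt_of_lt_of_le hzj ?_
  have e1 : Fintype.card {i // sortVec z i ≤ a} = Fintype.card {i // z i ≤ a} :=
    Fintype.card_congr (Equiv.subtypeEquiv (Tuple.sort z) (fun i => Iff.rfl))
  have e2 : Fintype.card {i // sortVec v i ≤ a} = Fintype.card {i // v i ≤ a} :=
    Fintype.card_congr (Equiv.subtypeEquiv (Tuple.sort v) (fun i => Iff.rfl))
  rw [e1, e2]
  exact Fintype.card_subtype_mono _ _ (fun i hi => le_trans (h i) hi)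

/-- Sorting a permuted monotone vector gives back the vector. -/
lemma sortVec_comp_perm {c : ℕ} (u : Fin c → ℝ) (hu : Monotone u) (π : Equiv.Perm (Fin c)) :
    sortVec (u ∘ π) = u := by
  have h1 : (u ∘ π) ∘ Tuple.sort (u ∘ π) = u ∘ Tuple.sort u :=
    Tuple.comp_perm_comp_sort_eq_comp_sort
  have h2 : Tuple.sort u = Equiv.refl _ := Tuple.sort_eq_refl_iff_monotone.2 hu
  show (u ∘ π) ∘ Tuple.sort (u ∘ π) = u
  rw [h1, h2]
  rfl

lemma kwStep_nonneg {c : ℕ} (V A : ℝ) (w : Fin c → ℝ) (i : Fin c) : 0 ≤ kwStep V A w i :=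
  le_max_right _ _

/-- The Lyapunov family of vectors dominating the orbit. -/
noncomputable def uF (c : ℕ) (m ε t : ℝ) (k : Fin c) : ℝ :=
  max (t + ((k : ℕ) : ℝ) * (m - ε / c))
    (max ((c : ℝ) * m - ε - ((c : ℝ) - ((k : ℕ) : ℝ)) * m) 0)

lemma uF_mono {c : ℕ} {m ε : ℝ} (t : ℝ) (hm : 0 ≤ m) (hμ : 0 ≤ m - ε / c) :
    Monotone (uF c m ε t) := by
  intro a b hab
  have hab' : (((a : ℕ)) : ℝ) ≤ ((b : ℕ) : ℝ) := by exact_mod_cast hab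
  unfold uF
  exact max_le_max (by nlinarith) (max_le_max (by nlinarith) le_rfl)

/-- One-step drift bound: if `W ≤ uF t` componentwise, then `step W ≤ uF (t - ε/c)`. -/
lemma step_bound {c' : ℕ} (m ε t : ℝ) (hm : 0 < m) (hε : 0 < ε)
    (hεcm : ε < ((c' + 1 : ℕ) : ℝ) * m) (W : Fin (c' + 1) → ℝ)
    (hW : ∀ i, W i ≤ uF (c' + 1) m ε t i) :
    ∀ i, kwStep (((c' + 1 : ℕ) : ℝ) * m - ε) m W i
      ≤ uF (c' + 1) m ε (t - ε / ((c' + 1 : ℕ) : ℝ)) i := by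
  have hcR0 : (0 : ℝ) < ((c' + 1 : ℕ) : ℝ) := by positivity
  set cR : ℝ := ((c' + 1 : ℕ) : ℝ) with hcRdef
  have hcRne : cR ≠ 0 := ne_of_gt hcR0
  have hcR1 : cR = (c' : ℝ) + 1 := by rw [hcRdef]; push_cast; ring
  have hμ : 0 ≤ m - ε / cR := by
    rw [sub_nonneg]
    rw [div_le_iff₀ hcR0]
    nlinarith
  set t' : ℝ := t - ε / cR with ht'
  set u : Fin (c' + 1) → ℝ := uF (c' + 1) m ε t' with hu
  have hu_mono : Monotone u := uF_mono t' hm.le hμ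
  set π : Equiv.Perm (Fin (c' + 1)) := Equiv.subRight (1 : Fin (c' + 1)) with hπ
  have hv : ∀ j : Fin (c' + 1),
      max (W j + (if (j : ℕ) = 0 then cR * m - ε else 0) - m) 0 ≤ (u ∘ π) j := by
    intro j
    have hWj := hW j
    have hπj : π j = j - 1 := rfl
    have hRHS0 : (0 : ℝ) ≤ (u ∘ π) j := by
      simp only [Function.comp_apply, hu, uF]
      exact le_trans (le_max_right _ _) (le_max_right _ _)
    by_cases hj : j = 0
    · have hj0 : (j : ℕ) = 0 := by rw [hj]; rfl
      have hval : ((π j) : ℕ) = c' := by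
        rw [hπj, hj]
        simp [Fin.coe_sub_one]
      have hA : t' + (c' : ℝ) * (m - ε / cR) ≤ (u ∘ π) j := by
        simp only [Function.comp_apply, hu, uF, hval]
        exact le_max_left _ _
      have hB : cR * m - ε - (cR - (c' : ℝ)) * m ≤ (u ∘ π) j := by
        simp only [Function.comp_apply, hu, uF, hval]
        exact le_trans (le_max_left _ _) (le_max_right _ _)
      have hWj' : W j ≤ max t (max (cR * m - ε - cR * m) 0) := by
        have : uF (c' + 1) m ε t j
            = max (t + ((0 : ℕ) : ℝ) * (m - ε / cR)) (max (cR * m - ε - (cR - ((0:ℕ):ℝ)) * m) 0) := by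
          simp only [uF, hj0]
          rfl
        rw [this] at hWj
        convert hWj using 3 <;> push_cast <;> ring
      have hmax0 : max (cR * m - ε - cR * m) 0 = 0 := max_eq_right (by linarith)
      rw [hmax0] at hWj'
      have hkey : t' + (c' : ℝ) * (m - ε / cR) = t + cR * m - ε - m := by
        rw [ht', hcR1]
        field_simp
        ring
      have hBm : (cR - (c' : ℝ)) * m = m := by rw [hcR1]; ring
      apply max_le _ hRHS0
      rw [if_pos hj0]
      rcases le_total t 0 with htneg | htpos
      · have hW0 : W j ≤ 0 := le_trans hWj' (by simp [max_le_iff]; exact htneg)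
        have : W j + (cR * m - ε) - m ≤ cR * m - ε - (cR - (c' : ℝ)) * m := by
          rw [hBm]; linarith
        linarith
      · have hWt : W j ≤ t := le_trans hWj' (by simp [max_le_iff, htpos])
        have : W j + (cR * m - ε) - m ≤ t' + (c' : ℝ) * (m - ε / cR) := by
          rw [hkey]; linarith
        linarith
    · have hj0 : (j : ℕ) ≠ 0 := fun h => hj (Fin.ext (by simpa using h))
      have h1j : 1 ≤ (j : ℕ) := Nat.one_le_iff_ne_zero.2 hj0
      have hval : ((π j) : ℕ) = (j : ℕ) - 1 := by
        rw [hπj]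
        rw [Fin.coe_sub_one, if_neg hj]
      have hcast : (((j : ℕ) - 1 : ℕ) : ℝ) = ((j : ℕ) : ℝ) - 1 := by
        push_cast [h1j]
        ring
      have hA : t' + (((j : ℕ) : ℝ) - 1) * (m - ε / cR) ≤ (u ∘ π) j := by
        simp only [Function.comp_apply, hu, uF, hval, hcast]
        exact le_max_left _ _
      have hB : cR * m - ε - (cR - (((j : ℕ) : ℝ) - 1)) * m ≤ (u ∘ π) j := by
        simp only [Function.comp_apply, hu, uF, hval, hcast]
        exact le_trans (le_max_left _ _) (le_max_right _ _)
      have hA' : t' + (((j : ℕ) : ℝ) - 1) * (m - ε / cR)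
          = t + ((j : ℕ) : ℝ) * (m - ε / cR) - m := by
        rw [ht']
        have hid : cR * (ε / cR) = ε := mul_div_cancel₀ ε hcRne
        field_simp
        ring
      have hB' : cR * m - ε - (cR - (((j : ℕ) : ℝ) - 1)) * m
          = (cR * m - ε - (cR - ((j : ℕ) : ℝ)) * m) - m := by ring
      have hWj' : W j ≤ max (t + ((j : ℕ) : ℝ) * (m - ε / cR))
          (max (cR * m - ε - (cR - ((j : ℕ) : ℝ)) * m) 0) := hWj
      apply max_le _ hRHS0
      rw [if_neg hj0]
      have hub : max (t + ((j : ℕ) : ℝ) * (m - ε / cR))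
          (max (cR * m - ε - (cR - ((j : ℕ) : ℝ)) * m) 0) ≤ (u ∘ π) j + m := by
        apply max_le
        · linarith [hA, hA']
        · apply max_le
          · linarith [hB, hB']
          · linarith [hRHS0, hm]
      linarith [hWj', hub]
  intro i
  have hstep : kwStep (cR * m - ε) m W i
      = sortVec (fun j => max (W j + (if (j : ℕ) = 0 then cR * m - ε else 0) - m) 0) i := rfl
  rw [hstep]
  calc sortVec (fun j => max (W j + (if (j : ℕ) = 0 then cR * m - ε else 0) - m) 0) i
      ≤ sortVec (u ∘ π) i := sortVec_le_sortVec hv i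
    _ = u i := by rw [sortVec_comp_perm u hu_mono π]

/-- The orbit is dominated by the Lyapunov family. -/
lemma kwIter_le_uF {c' : ℕ} (m ε K : ℝ) (hm : 0 < m) (hε : 0 < ε)
    (hεcm : ε < ((c' + 1 : ℕ) : ℝ) * m) (w : Fin (c' + 1) → ℝ) (hwK : ∀ i, w i ≤ K) :
    ∀ n i, kwIter (fun _ => ((c' + 1 : ℕ) : ℝ) * m - ε) (fun _ => m) w n i
      ≤ uF (c' + 1) m ε (K - n * (ε / ((c' + 1 : ℕ) : ℝ))) i := by
  have hcR0 : (0 : ℝ) < ((c' + 1 : ℕ) : ℝ) := by positivity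
  set cR : ℝ := ((c' + 1 : ℕ) : ℝ) with hcRdef
  have hμ : 0 ≤ m - ε / cR := by
    rw [sub_nonneg, div_le_iff₀ hcR0]
    nlinarith
  intro n
  induction n with
  | zero =>
    intro i
    show w i ≤ uF (c' + 1) m ε (K - ((0 : ℕ) : ℝ) * (ε / cR)) i
    have h0 : 0 ≤ (((i : ℕ)) : ℝ) * (m - ε / cR) := mul_nonneg (Nat.cast_nonneg _) hμ
    refine le_trans (hwK i) (le_trans ?_ (le_max_left _ _))
    simp only [Nat.cast_zero]
    linarith
  | succ n ih =>
    intro i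
    have hrec : kwIter (fun _ => cR * m - ε) (fun _ => m) w (n + 1)
        = kwStep (cR * m - ε) m (kwIter (fun _ => cR * m - ε) (fun _ => m) w n) := rfl
    rw [hrec]
    have htt : K - ((n + 1 : ℕ) : ℝ) * (ε / cR) = (K - (n : ℝ) * (ε / cR)) - ε / cR := by
      push_cast; ring
    rw [htt]
    exact step_bound m ε (K - (n : ℝ) * (ε / cR)) hm hε hεcm _ ih i

/-- drain-down of the constant-input Kiefer-Wolfowitz recursion. -/
theorem drain_down {c : ℕ} (hc : 0 < c) (m ε K : ℝ) (hm : 0 < m) (hε : 0 < ε)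
    (hεcm : ε < c * m) (hK : c * m < K)
    (w : Fin c → ℝ) (hw0 : ∀ i, 0 ≤ w i) (hws : Monotone w) (hwK : ∀ i, w i ≤ K) :
    ∀ n, ⌈(c : ℝ) * K / ε⌉₊ + 1 ≤ n → n ≤ ⌈(c : ℝ) * K / ε⌉₊ + c →
      kwIter (fun _ => c * m - ε) (fun _ => m) w n ⟨0, hc⟩ = 0 ∧
      ∀ i, kwIter (fun _ => c * m - ε) (fun _ => m) w n i < c * m := by
  obtain ⟨c', rfl⟩ : ∃ k, c = k + 1 := ⟨c - 1, (Nat.succ_pred_eq_of_pos hc).symm⟩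
  intro n hn1 hn2
  have hcR0 : (0 : ℝ) < ((c' + 1 : ℕ) : ℝ) := by positivity
  set cR : ℝ := ((c' + 1 : ℕ) : ℝ) with hcRdef
  have hcRne : cR ≠ 0 := ne_of_gt hcR0
  have hμ : 0 ≤ m - ε / cR := by
    rw [sub_nonneg, div_le_iff₀ hcR0]
    nlinarith
  have hεc : 0 < ε / cR := div_pos hε hcR0
  have hK0 : 0 < K := lt_trans (by nlinarith) hK
  -- the parameter t_n is ≤ -ε/cR
  have hNle : cR * K / ε ≤ (⌈cR * K / ε⌉₊ : ℝ) := Nat.le_ceil _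
  have hncast : ((⌈cR * K / ε⌉₊ : ℕ) : ℝ) + 1 ≤ (n : ℝ) := by
    have := hn1
    exact_mod_cast Nat.cast_le.2 this
  have htn : K - (n : ℝ) * (ε / cR) ≤ -(ε / cR) := by
    have h1 : cR * K / ε + 1 ≤ (n : ℝ) := by linarith
    have h2 : (cR * K / ε + 1) * (ε / cR) ≤ (n : ℝ) * (ε / cR) :=
      mul_le_mul_of_nonneg_right h1 hεc.le
    have h3 : (cR * K / ε + 1) * (ε / cR) = K + ε / cR := by
      field_simp
    linarith
  have hcR1 : cR = (c' : ℝ) + 1 := by rw [hcRdef]; push_cast; ring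
  set t : ℝ := K - (n : ℝ) * (ε / cR) with ht
  have hbound : ∀ i, kwIter (fun _ => cR * m - ε) (fun _ => m) w n i ≤ uF (c' + 1) m ε t i :=
    fun i => kwIter_le_uF m ε K hm hε hεcm w hwK n i
  constructor
  · -- smallest entry is 0
    have hle : kwIter (fun _ => cR * m - ε) (fun _ => m) w n ⟨0, hc⟩ ≤ 0 := by
      have h1 := hbound ⟨0, hc⟩
      have h2 : uF (c' + 1) m ε t ⟨0, hc⟩ ≤ 0 := by
        simp only [uF]
        apply max_le
        · simp only [Nat.cast_zero]
          have : t ≤ 0 := le_trans htn (by linarith)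
          linarith
        · apply max_le
          · simp only [Nat.cast_zero]
            linarith
          · exact le_refl 0
      exact le_trans h1 h2
    have hge : 0 ≤ kwIter (fun _ => cR * m - ε) (fun _ => m) w n ⟨0, hc⟩ := by
      obtain ⟨n', rfl⟩ : ∃ k, n = k + 1 := ⟨n - 1, by omega⟩
      exact kwStep_nonneg _ _ _ _
    linarith
  · -- all entries below cR * m
    intro i
    refine lt_of_le_of_lt (hbound i) ?_
    have hival : ((i : ℕ) : ℝ) ≤ cR - 1 := by
      have h : (i : ℕ) ≤ c' := Nat.lt_succ_iff.mp i.isLt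
      have h' : ((i : ℕ) : ℝ) ≤ (c' : ℝ) := by exact_mod_cast h
      linarith [hcR1]
    simp only [uF]
    apply max_lt
    · -- t + i * μ < cR * m
      have h1 : ((i : ℕ) : ℝ) * (m - ε / cR) ≤ (cR - 1) * (m - ε / cR) :=
        mul_le_mul_of_nonneg_right hival hμ
      have h2 : cR * (ε / cR) = ε := mul_div_cancel₀ ε hcRne
      nlinarith
    · apply max_lt
      · have h1 : (1 : ℝ) ≤ cR - ((i : ℕ) : ℝ) := by linarith
        nlinarith
      · nlinarith
end
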